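/- Let G be an internally 4-edge-connected graph with no K_{3,3} immersion, containing exactly two parallel edges between vertices u and v, both of degree four. Then the graph G' obtained from G by pinching this double edge (removing both edges, adding a new vertex w with double edges wu and wv) is internally 4-edge-connected and contains no immersion of K_{3,3}. -/

import Mathlib

/-- A finite multigraph without loops: vertices `V`, edges `E`,
each edge has an unordered pair of distinct endpoints. -/
structure Multigraph where
  V : Type
  E : Type
  [fV : Fintype V]
  [fE : Fintype E]
  [dV : DecidableEq V]
  [dE : DecidableEq E]
  ends : E → Sym2 V
  noLoop : ∀ e, ¬ (ends e).IsDiag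

attribute [instance] Multigraph.fV Multigraph.fE Multigraph.dV Multigraph.dE

namespace Multigraph

/-- Walks in a multigraph. -/
inductive Walk (G : Multigraph) : G.V → G.V → Type
  | nil (v : G.V) : Walk G v v
  | cons {u v w : G.V} (e : G.E) (h : G.ends e = s(u, v)) (p : Walk G v w) : Walk G u w

/-- The list of edges traversed by a walk. -/
def Walk.edges {G : Multigraph} : {u v : G.V} → G.Walk u v → List G.E
  | _, _, .nil _ => []
  | _, _, .cons e _ p => e :: p.edges

/-- The list of vertices visited by a walk. -/
def Walk.support {G : Multigraph} : {u v : G.V} → G.Walk u v → List G.V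
  | u, _, .nil _ => [u]
  | u, _, .cons _ _ p => u :: p.support

/-- A walk is a path if it visits no vertex twice. -/
def Walk.IsPath {G : Multigraph} {u v : G.V} (p : G.Walk u v) : Prop := p.support.Nodup

/-- Data of an immersion of `H` into `G`: an injective map on vertices and,
for each edge of `H`, a path in `G` joining the images of its endpoints,
the paths being pairwise edge-disjoint. -/
structure ImmersionData (H G : Multigraph) where
  vmap : H.V → G.V
  inj : Function.Injective vmap
  pstart : H.E → G.V
  pend : H.E → G.V
  walk : ∀ e, G.Walk (pstart e) (pend e)
  ends_eq : ∀ e, s(pstart e, pend e) = (H.ends e).map vmap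
  isPath : ∀ e, (walk e).IsPath
  edgeDisj : ∀ e e', e ≠ e' → List.Disjoint (walk e).edges (walk e').edges

/-- `H` immerses in `G`. -/
def Immerses (H G : Multigraph) : Prop := Nonempty (ImmersionData H G)

/-- Data witnessing that `G` contains a subdivision of `H` as a subgraph
(i.e. `H` is a topological minor of `G`): as an immersion, but moreover the
paths may only meet at images of common endpoints. -/
structure SubdivisionData (H G : Multigraph) extends ImmersionData H G where
  vtxDisj : ∀ e e', e ≠ e' → ∀ x, x ∈ (walk e).support → x ∈ (walk e').support →
    ∃ w, x = vmap w ∧ w ∈ H.ends e ∧ w ∈ H.ends e'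

/-- `G` contains a subdivision of `H` as a subgraph. -/
def ContainsSubdivision (H G : Multigraph) : Prop := Nonempty (SubdivisionData H G)

/-- The complete bipartite graph `K_{3,3}`. -/
def K33 : Multigraph where
  V := Fin 3 ⊕ Fin 3
  E := Fin 3 × Fin 3
  ends e := s(Sum.inl e.1, Sum.inr e.2)
  noLoop e := by simp [Sym2.mk_isDiag_iff]

/-- The complete graph `K_5`. -/
def K5 : Multigraph where
  V := Fin 5
  E := {p : Fin 5 × Fin 5 // p.1 < p.2}
  ends e := s(e.1.1, e.1.2)
  noLoop e := by simpa [Sym2.mk_isDiag_iff] using e.2.ne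

variable (G : Multigraph)

/-- The degree of a vertex: the number of incident edges. -/
def deg (v : G.V) : ℕ := (Finset.univ.filter fun e => v ∈ G.ends e).card

/-- The multiplicity of the (possible) edge between `u` and `v`. -/
def mult (u v : G.V) : ℕ := (Finset.univ.filter fun e => G.ends e = s(u, v)).card

/-- The edge cut determined by a set `A` of vertices. -/
def cut (A : Finset G.V) : Finset G.E :=
  Finset.univ.filter fun e => ∃ u ∈ A, ∃ v ∈ Aᶜ, G.ends e = s(u, v)

/-- Every edge cut of `G` has at least `k` edges. -/
def EdgeConnGe (k : ℕ) : Prop :=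
  ∀ A : Finset G.V, A.Nonempty → A ≠ Finset.univ → k ≤ (G.cut A).card

/-- Internally 4-edge-connected: 3-edge-connected and every 3-edge cut has a
side consisting of a single vertex. -/
def Internally4EC : Prop :=
  G.EdgeConnGe 3 ∧ ∀ A : Finset G.V, A.Nonempty → A ≠ Finset.univ →
    (G.cut A).card = 3 → A.card = 1 ∨ Aᶜ.card = 1

/-- Weakly 5-edge-connected: internally 4-edge-connected and every 4-edge cut
has a side with at most two vertices. -/
def Weakly5EC : Prop :=
  G.Internally4EC ∧ ∀ A : Finset G.V, A.Nonempty → A ≠ Finset.univ →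
    (G.cut A).card = 4 → A.card ≤ 2 ∨ Aᶜ.card ≤ 2

/-- `G` is `d`-regular. -/
def IsRegular (d : ℕ) : Prop := ∀ v, G.deg v = d

/-- `G` is connected. -/
def Connected : Prop := ∀ u v : G.V, Nonempty (G.Walk u v)

/-- `v` is a cut-vertex: the remaining vertices split into two nonempty parts
with no edge between them. -/
def IsCutVertex (v : G.V) : Prop :=
  ∃ C D : Finset G.V, C.Nonempty ∧ D.Nonempty ∧ Disjoint C D ∧ v ∉ C ∧ v ∉ D ∧
    (∀ x : G.V, x ∈ C ∪ D ∨ x = v) ∧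
    ∀ e : G.E, ¬ ∃ u ∈ C, ∃ w ∈ D, G.ends e = s(u, w)

/-- `G` is 2-connected. -/
def TwoConnected : Prop :=
  G.Connected ∧ 3 ≤ Fintype.card G.V ∧ ∀ v, ¬ G.IsCutVertex v

/-- Planarity, via Kuratowski's characterization: no subdivision of `K_5`
nor of `K_{3,3}` as a subgraph. -/
def Planar : Prop := ¬ ContainsSubdivision K5 G ∧ ¬ ContainsSubdivision K33 G

end Multigraph

lemma Sym2.isDiag_map_iff' {α β : Type*} {f : α → β} (hf : Function.Injective f)
    (s : Sym2 α) : (s.map f).IsDiag ↔ s.IsDiag := by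
  induction s using Sym2.ind with
  | _ x y => simp [Sym2.mk_isDiag_iff, hf.eq_iff]

namespace Multigraph

/-- Pinching the double edge between `u` and `v`: remove all edges between `u`
and `v`, add a new vertex `w`, and join `w` to each of `u` and `v` by a double
edge. -/
def pinch (G : Multigraph) (u v : G.V) : Multigraph where
  V := G.V ⊕ Unit
  E := {e : G.E // G.ends e ≠ s(u, v)} ⊕ (Fin 2 ⊕ Fin 2)
  ends e := match e with
    | .inl e => (G.ends e.1).map Sum.inl
    | .inr (.inl _) => s(Sum.inl u, Sum.inr ())
    | .inr (.inr _) => s(Sum.inl v, Sum.inr ())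
  noLoop e := match e with
    | .inl e => fun hd => G.noLoop e.1 ((Sym2.isDiag_map_iff' Sum.inl_injective _).mp hd)
    | .inr (.inl _) => by simp [Sym2.mk_isDiag_iff]
    | .inr (.inr _) => by simp [Sym2.mk_isDiag_iff]

end Multigraph

attribute [reducible] Multigraph.pinch

namespace Multigraph
variable {G : Multigraph}

namespace Walk

lemma start_mem_support : ∀ {a b : G.V} (p : G.Walk a b), a ∈ p.support
  | _, _, .nil _ => by simp [support]
  | _, _, .cons e h p => by simp [support]

lemma end_mem_support : ∀ {a b : G.V} (p : G.Walk a b), b ∈ p.support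
  | _, _, .nil _ => by simp [support]
  | _, _, .cons e h p => by simp [support, end_mem_support p]

lemma mem_support_of_edge : ∀ {a b : G.V} (p : G.Walk a b) {e : G.E} {x : G.V},
    e ∈ p.edges → x ∈ G.ends e → x ∈ p.support
  | _, _, .nil _, e, x => by simp [edges]
  | _, b, .cons (v := c) e' h' p, e, x => fun he hx => by
    simp only [edges, List.mem_cons] at he
    rcases he with rfl | he
    · rw [h'] at hx
      rcases Sym2.mem_iff.mp hx with rfl | rfl
      · exact start_mem_support _
      · simp [support, start_mem_support p]
    · simp [support, mem_support_of_edge p he hx]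

def append : ∀ {a b c : G.V}, G.Walk a b → G.Walk b c → G.Walk a c
  | _, _, _, .nil _, q => q
  | _, _, _, .cons e h p, q => .cons e h (p.append q)

lemma support_append : ∀ {a b c : G.V} (p : G.Walk a b) (q : G.Walk b c),
    (p.append q).support = p.support ++ q.support.tail
  | _, _, _, .nil _, q => by
    cases q with
    | nil => simp [append, support]
    | cons e h q => simp [append, support]
  | _, _, _, .cons e h p, q => by
    simp [append, support, support_append p q]

lemma edges_append : ∀ {a b c : G.V} (p : G.Walk a b) (q : G.Walk b c),
    (p.append q).edges = p.edges ++ q.edges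
  | _, _, _, .nil _, q => by simp [append, edges]
  | _, _, _, .cons e h p, q => by simp [append, edges, edges_append p q]

def reverse : ∀ {a b : G.V}, G.Walk a b → G.Walk b a
  | _, _, .nil a => .nil a
  | _, _, .cons e h p => p.reverse.append (.cons e (by rw [h, Sym2.eq_swap]) (.nil _))

lemma support_reverse : ∀ {a b : G.V} (p : G.Walk a b),
    p.reverse.support = p.support.reverse
  | _, _, .nil a => by simp [reverse, support]
  | _, _, .cons e h p => by
    simp [reverse, support_append, support_reverse p, support]

lemma edges_reverse : ∀ {a b : G.V} (p : G.Walk a b),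
    p.reverse.edges = p.edges.reverse
  | _, _, .nil a => by simp [reverse, edges]
  | _, _, .cons e h p => by simp [reverse, edges_append, edges_reverse p, edges]

lemma IsPath.reverse {a b : G.V} {p : G.Walk a b} (h : p.IsPath) : p.reverse.IsPath := by
  unfold IsPath at *
  rw [support_reverse]
  exact List.nodup_reverse.mpr h

lemma mem_support_reverse {a b : G.V} (p : G.Walk a b) {x : G.V} :
    x ∈ p.reverse.support ↔ x ∈ p.support := by
  rw [support_reverse]; exact List.mem_reverse

lemma mem_edges_reverse {a b : G.V} (p : G.Walk a b) {e : G.E} :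
    e ∈ p.reverse.edges ↔ e ∈ p.edges := by
  rw [edges_reverse]; exact List.mem_reverse

/-- The suffix of a walk starting from a vertex in its support, bundled with its
properties. -/
def suffixFrom : ∀ {a b : G.V} (p : G.Walk a b) (x : G.V), x ∈ p.support →
    {q : G.Walk x b // q.support.Sublist p.support ∧ q.edges.Sublist p.edges}
  | _, _, .nil a, x, h => by
    have hx : x = a := by simpa [support] using h
    subst hx
    exact ⟨.nil x, by simp⟩
  | _, _, .cons (u := a) (v := c) e he p, x, h => by
    by_cases hx : x ∈ p.support
    · obtain ⟨q, h1, h2⟩ := suffixFrom p x hx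
      exact ⟨q, h1.trans (by simp [support]), h2.trans (by simp [edges])⟩
    · have hxa : x = a := by
        simp only [support, List.mem_cons] at h
        tauto
      subst hxa
      exact ⟨.cons e he p, by simp⟩

end Walk
end Multigraph

namespace Multigraph
variable {G : Multigraph}
namespace Walk

lemma two_edges_at_interior : ∀ {a b : G.V} (p : G.Walk a b), p.IsPath →
    ∀ {x : G.V}, x ∈ p.support → x ≠ a → x ≠ b →
    ∃ e1 e2, e1 ∈ p.edges ∧ e2 ∈ p.edges ∧ e1 ≠ e2 ∧ x ∈ G.ends e1 ∧ x ∈ G.ends e2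
  | _, _, .nil a, hp, x, hx, hxa, hxb => absurd (by simpa [support] using hx) hxa
  | _, b, .cons (u := a) (v := c) e he q, hp, x, hx, hxa, hxb => by
    have hx' : x ∈ q.support := by
      simp only [support, List.mem_cons] at hx
      tauto
    have hnd : (a :: q.support).Nodup := hp
    by_cases hxc : x = c
    · subst hxc
      cases q with
      | nil => exact absurd rfl hxb
      | @cons _ d _ e2 he2 q2 =>
        refine ⟨e, e2, by simp [edges], by simp [edges], ?_, by rw [he]; simp, by rw [he2]; simp⟩
        rintro rfl
        rw [he2] at he
        have had : a = d := by
          rcases Sym2.eq_iff.mp he with ⟨h1, _⟩ | ⟨_, h2⟩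
          · exact absurd h1 hxa
          · exact h2.symm
        have h2 : a ∈ q2.support := had ▸ q2.start_mem_support
        have h3 : a ∈ (Walk.cons e he2 q2).support := by simp [support, h2]
        exact (List.nodup_cons.mp hnd).1 h3
    · obtain ⟨e1, e2, h1, h2, h3, h4, h5⟩ :=
        two_edges_at_interior q (List.nodup_cons.mp hnd).2 hx' (Ne.symm (fun h => hxc h.symm)) hxb
      exact ⟨e1, e2, by simp [edges, h1], by simp [edges, h2], h3, h4, h5⟩

lemma unique_edge_at_start {a b : G.V} (p : G.Walk a b) (hp : p.IsPath) {e e' : G.E}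
    (he : e ∈ p.edges) (he' : e' ∈ p.edges) (ha : a ∈ G.ends e) (ha' : a ∈ G.ends e') :
    e = e' := by
  cases p with
  | nil => simp [edges] at he
  | @cons _ c _ e0 he0 q =>
    have hnd : (a :: q.support).Nodup := hp
    have key : ∀ f, f ∈ (Walk.cons e0 he0 q).edges → a ∈ G.ends f → f = e0 := by
      intro f hf haf
      simp only [edges, List.mem_cons] at hf
      rcases hf with rfl | hf
      · rfl
      · exact absurd (q.mem_support_of_edge hf haf) (List.nodup_cons.mp hnd).1
    rw [key e he ha, key e' he' ha']

lemma exists_edge_at_start {a b : G.V} (p : G.Walk a b) (hab : a ≠ b) :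
    ∃ e ∈ p.edges, a ∈ G.ends e := by
  cases p with
  | nil => exact absurd rfl hab
  | cons e0 he0 q => exact ⟨e0, by simp [edges], by rw [he0]; simp⟩

end Walk

lemma sym2_exists_eq {α : Type*} (s : Sym2 α) : ∃ a b, s = s(a, b) := by
  induction s using Sym2.ind with
  | _ a b => exact ⟨a, b, rfl⟩

lemma card_filter_sum {α β : Type*} [Fintype α] [Fintype β] [DecidableEq α] [DecidableEq β]
    (p : α ⊕ β → Prop) [DecidablePred p] :
    (Finset.univ.filter p).card =
      (Finset.univ.filter fun a => p (.inl a)).card +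
      (Finset.univ.filter fun b => p (.inr b)).card := by
  have h1 : (Finset.univ.filter p).toLeft = Finset.univ.filter (fun a => p (.inl a)) := by
    ext x; simp
  have h2 : (Finset.univ.filter p).toRight = Finset.univ.filter (fun b => p (.inr b)) := by
    ext x; simp
  rw [← Finset.card_toLeft_add_card_toRight, h1, h2]

lemma card_filter_subtype {α : Type*} [Fintype α] [DecidableEq α] {q : α → Prop}
    [DecidablePred q] (p : α → Prop) [DecidablePred p] :
    (Finset.univ.filter fun x : {x // q x} => p x.1).card =
      (Finset.univ.filter fun x => q x ∧ p x).card := by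
  apply Finset.card_bij (fun a _ => a.1)
  · intro a ha
    simp only [Finset.mem_filter, Finset.mem_univ, true_and] at ha ⊢
    exact ⟨a.2, ha⟩
  · intro a _ a' _ h
    exact Subtype.ext h
  · intro x hx
    simp only [Finset.mem_filter, Finset.mem_univ, true_and] at hx
    exact ⟨⟨x, hx.1⟩, by simp [hx.2], rfl⟩

lemma card_filter_const {n : ℕ} (P : Prop) [Decidable P] :
    (Finset.univ.filter fun _ : Fin n => P).card = if P then n else 0 := by
  by_cases h : P <;> simp [h]

lemma cut_compl (G : Multigraph) (A : Finset G.V) : G.cut Aᶜ = G.cut A := by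
  ext e
  simp only [cut, Finset.mem_filter, Finset.mem_univ, true_and, compl_compl]
  constructor
  · rintro ⟨x, hx, y, hy, h⟩
    exact ⟨y, hy, x, hx, by rw [h, Sym2.eq_swap]⟩
  · rintro ⟨x, hx, y, hy, h⟩
    exact ⟨y, hy, x, hx, by rw [h, Sym2.eq_swap]⟩

lemma cut_singleton (G : Multigraph) (x : G.V) :
    G.cut {x} = Finset.univ.filter fun e => x ∈ G.ends e := by
  ext e
  simp only [cut, Finset.mem_filter, Finset.mem_univ, true_and, Finset.mem_singleton,
    Finset.mem_compl]
  constructor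
  · rintro ⟨a, rfl, b, hb, h⟩
    rw [h]; simp
  · intro hx
    obtain ⟨a, b, hab⟩ := sym2_exists_eq (G.ends e)
    have hne : a ≠ b := by
      intro h
      exact G.noLoop e (by rw [hab, h]; simp)
    rw [hab] at hx
    rcases Sym2.mem_iff.mp hx with h | h
    · exact ⟨x, rfl, b, by rw [h]; exact hne.symm, by rw [hab, h]⟩
    · exact ⟨x, rfl, a, by rw [h]; exact hne, by rw [hab, h, Sym2.eq_swap]⟩

lemma cut_singleton_card (G : Multigraph) (x : G.V) : (G.cut {x}).card = G.deg x := by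
  rw [cut_singleton]; rfl

end Multigraph

namespace Multigraph

lemma cross_pair_iff {V : Type*} [DecidableEq V] [Fintype V] (A : Finset V) (a b : V) :
    (∃ x ∈ A, ∃ y ∈ Aᶜ, s(a, b) = s(x, y)) ↔ (a ∈ A ∧ b ∉ A) ∨ (b ∈ A ∧ a ∉ A) := by
  constructor
  · rintro ⟨x, hx, y, hy, hxy⟩
    rcases Sym2.eq_iff.mp hxy with ⟨rfl, rfl⟩ | ⟨rfl, rfl⟩
    · exact Or.inl ⟨hx, by simpa using hy⟩
    · exact Or.inr ⟨hx, by simpa using hy⟩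
  · rintro (⟨ha, hb⟩ | ⟨hb, ha⟩)
    · exact ⟨a, ha, b, by simpa using hb, rfl⟩
    · exact ⟨b, hb, a, by simpa using ha, Sym2.eq_swap⟩

lemma cross_map_inl {G : Multigraph} (A' : Finset (G.V ⊕ Unit)) (s : Sym2 G.V) :
    (∃ x ∈ A', ∃ y ∈ A'ᶜ, s.map Sum.inl = s(x, y)) ↔
      ∃ a ∈ A'.toLeft, ∃ b ∈ A'.toLeftᶜ, s = s(a, b) := by
  obtain ⟨a, b, rfl⟩ := sym2_exists_eq s
  rw [Sym2.map_pair_eq, cross_pair_iff, cross_pair_iff]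
  simp [Finset.mem_toLeft]

section PinchFacts

variable {G : Multigraph} {u v : G.V}

lemma mult_pos_ne (hmult : G.mult u v = 2) : u ≠ v := by
  have h : (Finset.univ.filter fun e => G.ends e = s(u, v)).Nonempty := by
    rw [← Finset.card_pos]
    show 0 < G.mult u v
    omega
  obtain ⟨e, he⟩ := h
  simp only [Finset.mem_filter] at he
  intro h
  exact G.noLoop e (by rw [he.2, h]; simp)

lemma exists_two_uv_edges (hmult : G.mult u v = 2) :
    ∃ ε1 ε2 : G.E, ε1 ≠ ε2 ∧ G.ends ε1 = s(u, v) ∧ G.ends ε2 = s(u, v) := by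
  have h : 1 < (Finset.univ.filter fun e => G.ends e = s(u, v)).card := by
    show 1 < G.mult u v
    omega
  obtain ⟨e1, h1, e2, h2, hne⟩ := Finset.one_lt_card.mp h
  simp only [Finset.mem_filter] at h1 h2
  exact ⟨e1, e2, hne, h1.2, h2.2⟩

lemma deg_split (hmult : G.mult u v = 2) (y : G.V) (hy : y = u ∨ y = v) :
    G.deg y = (Finset.univ.filter fun e => y ∈ G.ends e ∧ G.ends e ≠ s(u, v)).card + 2 := by
  have := Finset.card_filter_add_card_filter_not
    (s := Finset.univ.filter fun e => y ∈ G.ends e) (p := fun e => G.ends e = s(u, v))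
  rw [Finset.filter_filter, Finset.filter_filter] at this
  have hm : (Finset.univ.filter fun e => y ∈ G.ends e ∧ G.ends e = s(u, v)).card = 2 := by
    rw [← hmult]
    congr 1
    ext e
    simp only [Finset.mem_filter, Finset.mem_univ, true_and, mult]
    constructor
    · exact fun h => h.2
    · intro h
      refine ⟨?_, h⟩
      rw [h]
      rcases hy with rfl | rfl <;> simp
  have hne : (Finset.univ.filter fun e => y ∈ G.ends e ∧ ¬ G.ends e = s(u, v)).card
      = (Finset.univ.filter fun e => y ∈ G.ends e ∧ G.ends e ≠ s(u, v)).card := rfl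
  unfold deg
  omega

lemma pinch_deg_inl (y : G.V) :
    (G.pinch u v).deg (Sum.inl y) =
      (Finset.univ.filter fun e => y ∈ G.ends e ∧ G.ends e ≠ s(u, v)).card
      + (if y = u then 2 else 0) + (if y = v then 2 else 0) := by
  unfold deg
  rw [card_filter_sum, card_filter_sum]
  have h1 : (Finset.univ.filter fun e : {e : G.E // G.ends e ≠ s(u, v)} =>
      Sum.inl y ∈ (G.pinch u v).ends (Sum.inl e)).card
      = (Finset.univ.filter fun e => y ∈ G.ends e ∧ G.ends e ≠ s(u, v)).card := by
    have hpred : ∀ e : {e : G.E // G.ends e ≠ s(u, v)},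
        (Sum.inl y ∈ (G.pinch u v).ends (Sum.inl e)) ↔ y ∈ G.ends e.1 := by
      intro e
      rw [show (G.pinch u v).ends (Sum.inl e) = (G.ends e.1).map Sum.inl from rfl, Sym2.mem_map]
      constructor
      · rintro ⟨x, hx, hxy⟩
        rwa [← Sum.inl_injective hxy]
      · intro hy'
        exact ⟨y, hy', rfl⟩
    simp only [hpred]
    rw [card_filter_subtype (q := fun e : G.E => G.ends e ≠ s(u, v))
      (p := fun e => y ∈ G.ends e)]
    congr 1
    ext e
    simp only [Finset.mem_filter, Finset.mem_univ, true_and]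
    tauto
  have h2 : (Finset.univ.filter fun t : Fin 2 =>
      Sum.inl y ∈ (G.pinch u v).ends (Sum.inr (Sum.inl t))).card = if y = u then 2 else 0 := by
    have : ∀ t : Fin 2, (Sum.inl y ∈ (G.pinch u v).ends (Sum.inr (Sum.inl t))) ↔ y = u := by
      intro t
      show Sum.inl y ∈ s(Sum.inl u, Sum.inr ()) ↔ y = u
      rw [Sym2.mem_iff]
      simp [Sum.inl_injective.eq_iff]
    simp only [this]
    exact (congrArg Finset.card (Finset.filter_congr (fun t _ => this t))).trans (card_filter_const _)
  have h3 : (Finset.univ.filter fun t : Fin 2 =>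
      Sum.inl y ∈ (G.pinch u v).ends (Sum.inr (Sum.inr t))).card = if y = v then 2 else 0 := by
    have : ∀ t : Fin 2, (Sum.inl y ∈ (G.pinch u v).ends (Sum.inr (Sum.inr t))) ↔ y = v := by
      intro t
      show Sum.inl y ∈ s(Sum.inl v, Sum.inr ()) ↔ y = v
      rw [Sym2.mem_iff]
      simp [Sum.inl_injective.eq_iff]
    simp only [this]
    exact (congrArg Finset.card (Finset.filter_congr (fun t _ => this t))).trans (card_filter_const _)
  rw [h1, h2, h3]
  omega

lemma pinch_deg_u (hmult : G.mult u v = 2) (hdu : G.deg u = 4) :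
    (G.pinch u v).deg (Sum.inl u) = 4 := by
  have huv := mult_pos_ne hmult
  have h := deg_split hmult u (Or.inl rfl)
  rw [pinch_deg_inl, if_pos rfl, if_neg huv]
  omega

lemma pinch_deg_v (hmult : G.mult u v = 2) (hdv : G.deg v = 4) :
    (G.pinch u v).deg (Sum.inl v) = 4 := by
  have huv := mult_pos_ne hmult
  have h := deg_split hmult v (Or.inr rfl)
  rw [pinch_deg_inl, if_neg (Ne.symm huv), if_pos rfl]
  omega

lemma cut_card_split (hmult : G.mult u v = 2) (A : Finset G.V) :
    (G.cut A).card = ((G.cut A).filter fun e => G.ends e ≠ s(u, v)).card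
      + (if (u ∈ A ∧ v ∉ A) ∨ (v ∈ A ∧ u ∉ A) then 2 else 0) := by
  have hsplit := Finset.card_filter_add_card_filter_not
    (s := G.cut A) (p := fun e => G.ends e = s(u, v))
  have h2 : ((G.cut A).filter fun e => G.ends e = s(u, v)).card
      = if (u ∈ A ∧ v ∉ A) ∨ (v ∈ A ∧ u ∉ A) then 2 else 0 := by
    by_cases hc : (u ∈ A ∧ v ∉ A) ∨ (v ∈ A ∧ u ∉ A)
    · rw [if_pos hc, ← hmult]
      congr 1
      ext e
      simp only [Finset.mem_filter, cut, Finset.mem_univ, true_and, mult]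
      constructor
      · exact fun h => h.2
      · intro h
        refine ⟨?_, h⟩
        rw [h]
        exact (cross_pair_iff A u v).mpr (by simpa using hc)
    · rw [if_neg hc]
      rw [Finset.card_eq_zero]
      rw [Finset.filter_eq_empty_iff]
      intro e he
      simp only [cut, Finset.mem_filter, Finset.mem_univ, true_and] at he
      intro hee
      rw [hee] at he
      exact hc (by simpa using (cross_pair_iff A u v).mp he)
  have h3 : ((G.cut A).filter fun e => ¬ G.ends e = s(u, v)).card
      = ((G.cut A).filter fun e => G.ends e ≠ s(u, v)).card := rfl
  omega

lemma pinch_cut_card (hmult : G.mult u v = 2) (A' : Finset (G.pinch u v).V)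
    (hw : Sum.inr () ∈ A') :
    ((G.pinch u v).cut A').card =
      ((G.cut A'.toLeft).filter fun e => G.ends e ≠ s(u, v)).card
      + ((if Sum.inl u ∈ A' then 0 else 2) + (if Sum.inl v ∈ A' then 0 else 2)) := by
  unfold cut
  rw [card_filter_sum, card_filter_sum]
  have hL : (Finset.univ.filter fun e : {e : G.E // G.ends e ≠ s(u, v)} =>
        ∃ x ∈ A', ∃ y ∈ A'ᶜ, (G.pinch u v).ends (Sum.inl e) = s(x, y)).card
      = ((Finset.univ.filter fun e => ∃ a ∈ A'.toLeft, ∃ b ∈ A'.toLeftᶜ,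
          G.ends e = s(a, b)).filter fun e => G.ends e ≠ s(u, v)).card := by
    have hpred : ∀ e : {e : G.E // G.ends e ≠ s(u, v)},
        (∃ x ∈ A', ∃ y ∈ A'ᶜ, (G.pinch u v).ends (Sum.inl e) = s(x, y)) ↔
        (∃ a ∈ A'.toLeft, ∃ b ∈ A'.toLeftᶜ, G.ends e.1 = s(a, b)) := fun e =>
      cross_map_inl A' (G.ends e.1)
    simp only [hpred]
    rw [card_filter_subtype (q := fun e : G.E => G.ends e ≠ s(u, v))
      (p := fun e => ∃ a ∈ A'.toLeft, ∃ b ∈ A'.toLeftᶜ, G.ends e = s(a, b))]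
    congr 1
    rw [Finset.filter_filter]
    ext e
    simp only [Finset.mem_filter, Finset.mem_univ, true_and]
    tauto
  have hu : ∀ t : Fin 2,
      (∃ x ∈ A', ∃ y ∈ A'ᶜ, (G.pinch u v).ends (Sum.inr (Sum.inl t)) = s(x, y)) ↔
      Sum.inl u ∉ A' := by
    intro t
    rw [show ((G.pinch u v).ends (Sum.inr (Sum.inl t))) = s(Sum.inl u, (Sum.inr () : G.V ⊕ Unit)) from rfl]
    rw [cross_pair_iff]
    simp only [Finset.mem_compl] at *
    constructor
    · rintro (⟨h1, h2⟩ | ⟨h1, h2⟩)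
      · exact absurd hw h2
      · exact h2
    · intro h
      exact Or.inr ⟨hw, h⟩
  have hv : ∀ t : Fin 2,
      (∃ x ∈ A', ∃ y ∈ A'ᶜ, (G.pinch u v).ends (Sum.inr (Sum.inr t)) = s(x, y)) ↔
      Sum.inl v ∉ A' := by
    intro t
    rw [show ((G.pinch u v).ends (Sum.inr (Sum.inr t))) = s(Sum.inl v, (Sum.inr () : G.V ⊕ Unit)) from rfl]
    rw [cross_pair_iff]
    constructor
    · rintro (⟨h1, h2⟩ | ⟨h1, h2⟩)
      · exact absurd hw h2
      · exact h2
    · intro h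
      exact Or.inr ⟨hw, h⟩
  simp only [hu, hv, card_filter_const]
  rw [hL]
  by_cases h1 : Sum.inl u ∈ A' <;> by_cases h2 : Sum.inl v ∈ A' <;> simp [h1, h2, hw]

end PinchFacts
end Multigraph

namespace Multigraph

lemma cut_empty (G : Multigraph) : G.cut ∅ = ∅ := by
  ext e; simp [cut]

section PartA

variable {G : Multigraph} {u v : G.V}

lemma compl_toLeft {V : Type*} [Fintype V] [DecidableEq V] (A' : Finset (V ⊕ Unit)) :
    A'ᶜ.toLeft = A'.toLeftᶜ := by
  ext a; simp

lemma card_compl_of_mem {V : Type*} [Fintype V] [DecidableEq V] (A' : Finset (V ⊕ Unit))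
    (hw : Sum.inr () ∈ A') : A'ᶜ.card = A'.toLeftᶜ.card := by
  rw [← Finset.card_toLeft_add_card_toRight (u := A'ᶜ), compl_toLeft]
  have : A'ᶜ.toRight = ∅ := by
    ext t
    cases t
    simp [hw]
  rw [this]
  simp

lemma pinch_cut_main (h4ec : G.Internally4EC) (hmult : G.mult u v = 2)
    (hdu : G.deg u = 4) (hdv : G.deg v = 4)
    (A' : Finset (G.pinch u v).V) (hw : Sum.inr () ∈ A') (hA : A' ≠ Finset.univ) :
    3 ≤ ((G.pinch u v).cut A').card ∧
      (((G.pinch u v).cut A').card = 3 → A'.card = 1 ∨ A'ᶜ.card = 1) := by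
  classical
  have huv : u ≠ v := mult_pos_ne hmult
  set A : Finset G.V := A'.toLeft with hAdef
  have hAuniv : A ≠ Finset.univ := by
    intro h
    apply hA
    ext x
    simp only [Finset.mem_univ, iff_true]
    cases x with
    | inl a =>
      have : a ∈ A := h ▸ Finset.mem_univ a
      simpa [hAdef] using this
    | inr t => cases t; exact hw
  have hcut' := pinch_cut_card hmult A' hw
  rw [← hAdef] at hcut'
  have hcutG := cut_card_split hmult A
  have hcompl1 : A'ᶜ.card = Aᶜ.card := card_compl_of_mem A' hw
  by_cases hu : Sum.inl u ∈ A' <;> by_cases hv : Sum.inl v ∈ A'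
  · -- both in A'
    have huA : u ∈ A := by simpa [hAdef] using hu
    have hvA : v ∈ A := by simpa [hAdef] using hv
    rw [if_pos hu, if_pos hv] at hcut'
    rw [if_neg (by simp [huA, hvA])] at hcutG
    have hAne : A.Nonempty := ⟨u, huA⟩
    have h3 := h4ec.1 A hAne hAuniv
    have hcard : ((G.pinch u v).cut A').card = (G.cut A).card := by omega
    constructor
    · omega
    · intro hc3
      rcases h4ec.2 A hAne hAuniv (by omega) with h1 | h1
      · exfalso
        have : 1 < A.card := Finset.one_lt_card.mpr ⟨u, huA, v, hvA, huv⟩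
        omega
      · right; omega
  · -- u in, v out
    have huA : u ∈ A := by simpa [hAdef] using hu
    have hvA : v ∉ A := by simpa [hAdef] using hv
    rw [if_pos hu, if_neg hv] at hcut'
    rw [if_pos (Or.inl ⟨huA, hvA⟩)] at hcutG
    have hAne : A.Nonempty := ⟨u, huA⟩
    have h3 := h4ec.1 A hAne hAuniv
    have hcard : ((G.pinch u v).cut A').card = (G.cut A).card := by omega
    refine ⟨by omega, fun hc3 => ?_⟩
    exfalso
    rcases h4ec.2 A hAne hAuniv (by omega) with h1 | h1
    · obtain ⟨x, hx⟩ := Finset.card_eq_one.mp h1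
      have : A = {u} := by rw [hx]; rw [hx] at huA; simp at huA; rw [huA]
      have : (G.cut A).card = 4 := by rw [this, cut_singleton_card, hdu]
      omega
    · obtain ⟨x, hx⟩ := Finset.card_eq_one.mp h1
      have hvx : v ∈ Aᶜ := Finset.mem_compl.mpr hvA
      rw [hx] at hvx
      simp only [Finset.mem_singleton] at hvx
      have : (G.cut A).card = 4 := by
        rw [← cut_compl, hx, ← hvx, cut_singleton_card, hdv]
      omega
  · -- v in, u out
    have huA : u ∉ A := by simpa [hAdef] using hu
    have hvA : v ∈ A := by simpa [hAdef] using hv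
    rw [if_neg hu, if_pos hv] at hcut'
    rw [if_pos (Or.inr ⟨hvA, huA⟩)] at hcutG
    have hAne : A.Nonempty := ⟨v, hvA⟩
    have h3 := h4ec.1 A hAne hAuniv
    have hcard : ((G.pinch u v).cut A').card = (G.cut A).card := by omega
    refine ⟨by omega, fun hc3 => ?_⟩
    exfalso
    rcases h4ec.2 A hAne hAuniv (by omega) with h1 | h1
    · obtain ⟨x, hx⟩ := Finset.card_eq_one.mp h1
      have : A = {v} := by rw [hx]; rw [hx] at hvA; simp at hvA; rw [hvA]
      have : (G.cut A).card = 4 := by rw [this, cut_singleton_card, hdv]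
      omega
    · obtain ⟨x, hx⟩ := Finset.card_eq_one.mp h1
      have hux : u ∈ Aᶜ := Finset.mem_compl.mpr huA
      rw [hx] at hux
      simp only [Finset.mem_singleton] at hux
      have : (G.cut A).card = 4 := by
        rw [← cut_compl, hx, ← hux, cut_singleton_card, hdu]
      omega
  · -- both out
    have huA : u ∉ A := by simpa [hAdef] using hu
    have hvA : v ∉ A := by simpa [hAdef] using hv
    rw [if_neg hu, if_neg hv] at hcut'
    rw [if_neg (by simp [huA, hvA])] at hcutG
    by_cases hAe : A = ∅
    · have : (G.cut A).card = 0 := by rw [hAe, cut_empty]; simp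
      have hF : ((G.cut A).filter fun e => G.ends e ≠ s(u, v)).card = 0 := by
        have := Finset.card_filter_le (G.cut A) (fun e => G.ends e ≠ s(u, v))
        omega
      refine ⟨by omega, fun hc3 => by omega⟩
    · have hAne : A.Nonempty := Finset.nonempty_of_ne_empty hAe
      have h3 := h4ec.1 A hAne hAuniv
      refine ⟨by omega, fun hc3 => by omega⟩

lemma pinch_internally4EC (h4ec : G.Internally4EC) (hmult : G.mult u v = 2)
    (hdu : G.deg u = 4) (hdv : G.deg v = 4) : (G.pinch u v).Internally4EC := by
  classical
  have main : ∀ A' : Finset (G.pinch u v).V, A'.Nonempty → A' ≠ Finset.univ →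
      3 ≤ ((G.pinch u v).cut A').card ∧
        (((G.pinch u v).cut A').card = 3 → A'.card = 1 ∨ A'ᶜ.card = 1) := by
    intro A' hne hAuniv
    by_cases hw : Sum.inr () ∈ A'
    · exact pinch_cut_main h4ec hmult hdu hdv A' hw hAuniv
    · have hw' : Sum.inr () ∈ A'ᶜ := Finset.mem_compl.mpr hw
      have hne' : A'ᶜ ≠ Finset.univ := by
        intro h
        obtain ⟨x, hx⟩ := hne
        have : x ∈ A'ᶜ := h ▸ Finset.mem_univ x
        exact Finset.mem_compl.mp this hx
      obtain ⟨hge, heq⟩ := pinch_cut_main h4ec hmult hdu hdv A'ᶜ hw' hne'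
      rw [cut_compl] at hge heq
      refine ⟨hge, fun h3 => ?_⟩
      rcases heq h3 with h | h
      · right; exact h
      · left; rwa [compl_compl] at h
  exact ⟨fun A' hne hA => (main A' hne hA).1, fun A' hne hA => (main A' hne hA).2⟩

end PartA
end Multigraph

namespace Multigraph

section PartBInfra

variable {G : Multigraph} {u v : G.V}

/-- Cast a walk along endpoint equalities. -/
lemma walk_congr {a b a' b' : G.V} (p : G.Walk a b) (ha : a = a') (hb : b = b') :
    ∃ q : G.Walk a' b', q.support = p.support ∧ q.edges = p.edges := by
  subst ha; subst hb; exact ⟨p, rfl, rfl⟩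

/-- A path from a vertex to itself is trivial. -/
lemma path_self_nil {a : G.V} (p : G.Walk a a) (hp : p.IsPath) : p.edges = [] := by
  cases p with
  | nil => rfl
  | cons e he q =>
    exfalso
    have h1 : a ∈ q.support := q.end_mem_support
    exact (List.nodup_cons.mp hp).1 h1

lemma exists_edge_at_end {a b : G.V} (p : G.Walk a b) (hab : a ≠ b) :
    ∃ e ∈ p.edges, b ∈ G.ends e := by
  obtain ⟨e, he, hb⟩ := p.reverse.exists_edge_at_start (Ne.symm hab)
  exact ⟨e, (p.mem_edges_reverse).mp he, hb⟩

lemma pinch_inr_ends_cases (i : Fin 2 ⊕ Fin 2) :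
    ∃ z : G.V, (z = u ∨ z = v) ∧
      (G.pinch u v).ends (Sum.inr i) = s(Sum.inl z, Sum.inr ()) := by
  rcases i with t | t
  · exact ⟨u, Or.inl rfl, rfl⟩
  · exact ⟨v, Or.inr rfl, rfl⟩

lemma w_not_mem_inl_ends (e : {e : G.E // G.ends e ≠ s(u, v)}) :
    (Sum.inr () : G.V ⊕ Unit) ∉ (G.pinch u v).ends (Sum.inl e) := by
  intro h
  rw [show (G.pinch u v).ends (Sum.inl e) = (G.ends e.1).map Sum.inl from rfl,
    Sym2.mem_map] at h
  obtain ⟨x, _, hx⟩ := h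
  exact nomatch hx

lemma w_edge_is_inr {e : (G.pinch u v).E}
    (h : (Sum.inr () : G.V ⊕ Unit) ∈ (G.pinch u v).ends e) : ∃ i, e = Sum.inr i := by
  cases e with
  | inl f => exact absurd h (w_not_mem_inl_ends f)
  | inr i => exact ⟨i, rfl⟩

lemma map_inl_eq_pair {s : Sym2 G.V} {a : G.V} {c : G.V ⊕ Unit}
    (h : s.map Sum.inl = s(Sum.inl a, c)) : ∃ c', c = Sum.inl c' ∧ s = s(a, c') := by
  obtain ⟨x, y, rfl⟩ := sym2_exists_eq s
  rw [Sym2.map_pair_eq] at h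
  rcases Sym2.eq_iff.mp h with ⟨h1, h2⟩ | ⟨h1, h2⟩
  · exact ⟨y, h2.symm, by rw [← Sum.inl_injective h1]⟩
  · exact ⟨x, h1.symm, by rw [← Sum.inl_injective h2, Sym2.eq_swap]⟩

lemma pair_w_eq {z a : G.V} {c : G.V ⊕ Unit}
    (h : s(Sum.inl z, (Sum.inr () : G.V ⊕ Unit)) = s(Sum.inl a, c)) :
    z = a ∧ c = Sum.inr () := by
  rcases Sym2.eq_iff.mp h with ⟨h1, h2⟩ | ⟨h1, h2⟩
  · exact ⟨Sum.inl_injective h1, h2.symm⟩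
  · exact nomatch h2

/-- The other parallel edge at `w` on the same side. -/
def partner : Fin 2 ⊕ Fin 2 → Fin 2 ⊕ Fin 2
  | .inl t => .inl (t + 1)
  | .inr t => .inr (t + 1)

lemma partner_ne (j : Fin 2 ⊕ Fin 2) : partner j ≠ j := by
  rcases j with t | t <;> simp [partner] <;> omega

lemma partner_ends (j : Fin 2 ⊕ Fin 2) :
    (G.pinch u v).ends (Sum.inr (partner j)) = (G.pinch u v).ends (Sum.inr j) := by
  rcases j with t | t <;> rfl

lemma side_card (j1 j2 j3 : Fin 2 ⊕ Fin 2) (h12 : j1 ≠ j2) (h13 : j1 ≠ j3) (h23 : j2 ≠ j3)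
    (e12 : (G.pinch u v).ends (Sum.inr j1) = (G.pinch u v).ends (Sum.inr j2))
    (e13 : (G.pinch u v).ends (Sum.inr j1) = (G.pinch u v).ends (Sum.inr j3))
    (huv : u ≠ v) : False := by
  have hside : ∀ j j' : Fin 2 ⊕ Fin 2,
      (G.pinch u v).ends (Sum.inr j) = (G.pinch u v).ends (Sum.inr j') →
      j.isLeft = j'.isLeft := by
    rintro (t | t) (t' | t') h <;> simp_all
  have h12' := hside _ _ e12
  have h13' := hside _ _ e13
  revert h12 h13 h23 h12' h13'
  rcases j1 with t1 | t1 <;> rcases j2 with t2 | t2 <;> rcases j3 with t3 | t3 <;>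
    simp <;> (intros; omega)

end PartBInfra
end Multigraph

namespace Multigraph

section Proj

variable {G : Multigraph} {u v : G.V}

def Walk.copy {G : Multigraph} {a b a' b' : G.V} (p : G.Walk a b) (ha : a = a')
    (hb : b = b') : G.Walk a' b' := by subst ha; subst hb; exact p

lemma Walk.support_copy {G : Multigraph} {a b a' b' : G.V} (p : G.Walk a b) (ha : a = a')
    (hb : b = b') : (p.copy ha hb).support = p.support := by subst ha; subst hb; rfl

lemma Walk.edges_copy {G : Multigraph} {a b a' b' : G.V} (p : G.Walk a b) (ha : a = a')
    (hb : b = b') : (p.copy ha hb).edges = p.edges := by subst ha; subst hb; rfl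

/-- Project a walk of the pinched graph with endpoints away from the new vertex back
to a walk of `G`, replacing a passage through the new vertex by the edge `ε`. -/
noncomputable def projWalk (ε : G.E) (hε : G.ends ε = s(u, v)) :
    ∀ {a' b' : (G.pinch u v).V} (p : (G.pinch u v).Walk a' b') (a b : G.V),
      a' = Sum.inl a → b' = Sum.inl b →
      {q : G.Walk a b // (q.support.map Sum.inl).Sublist p.support ∧
        ∀ x ∈ q.edges, (∃ hf, (Sum.inl ⟨x, hf⟩ : (G.pinch u v).E) ∈ p.edges) ∨
          (x = ε ∧ ∃ i : Fin 2 ⊕ Fin 2, (Sum.inr i : (G.pinch u v).E) ∈ p.edges)}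
  | _, _, .nil s, a, b, ha, hb => by
    subst ha
    have hab : a = b := Sum.inl_injective hb
    subst hab
    exact ⟨.nil a, by simp [Walk.support], by simp [Walk.edges]⟩
  | _, _, .cons (Sum.inl f) he p, a, b, ha, hb => by
    subst ha
    have hex := map_inl_eq_pair (a := a) he
    obtain ⟨q, hq1, hq2⟩ := projWalk ε hε p hex.choose b hex.choose_spec.1 hb
    refine ⟨.cons f.1 hex.choose_spec.2 q, ?_, ?_⟩
    · show (Sum.inl a :: q.support.map Sum.inl).Sublist (Sum.inl a :: p.support)
      exact hq1.cons₂ _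
    · intro x hx
      rcases List.mem_cons.mp hx with rfl | hx
      · exact Or.inl ⟨f.2, by simp [Walk.edges]⟩
      · rcases hq2 x hx with ⟨hf', hmem⟩ | ⟨hxε, i, hmem⟩
        · exact Or.inl ⟨hf', by simp [Walk.edges, hmem]⟩
        · exact Or.inr ⟨hxε, i, by simp [Walk.edges, hmem]⟩
  | _, _, .cons (Sum.inr i) he (Walk.nil _), a, b, ha, hb => by
    exfalso
    subst ha
    have hex := pinch_inr_ends_cases (u := u) (v := v) i
    have hzi : (G.pinch u v).ends (Sum.inr i) = s(Sum.inl hex.choose, Sum.inr ()) :=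
      hex.choose_spec.2
    rw [hzi] at he
    have hcW := (pair_w_eq he).2
    rw [hcW] at hb
    exact nomatch hb
  | _, _, .cons (Sum.inr i) he (@Walk.cons (G.pinch u v) _ d _ e2 he2 p2), a, b, ha, hb => by
    subst ha
    have hex := pinch_inr_ends_cases (u := u) (v := v) i
    have hz : hex.choose = u ∨ hex.choose = v := hex.choose_spec.1
    have hzi : (G.pinch u v).ends (Sum.inr i) = s(Sum.inl hex.choose, Sum.inr ()) :=
      hex.choose_spec.2
    rw [hzi] at he
    have hza : hex.choose = a := (pair_w_eq he).1
    have hcW := (pair_w_eq he).2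
    subst hcW
    rw [hza] at hz
    cases e2 with
    | inl f2 =>
      exact absurd (by rw [he2]; exact Sym2.mem_mk_left _ _) (w_not_mem_inl_ends f2)
    | inr i2 =>
      have hex2 := pinch_inr_ends_cases (u := u) (v := v) i2
      have hz2 : hex2.choose = u ∨ hex2.choose = v := hex2.choose_spec.1
      have hzi2 : (G.pinch u v).ends (Sum.inr i2)
          = s(Sum.inl hex2.choose, Sum.inr ()) := hex2.choose_spec.2
      have hd : d = Sum.inl hex2.choose := by
        have h := he2
        rw [hzi2] at h
        rcases Sym2.eq_iff.mp h with ⟨h1, h2⟩ | ⟨h1, h2⟩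
        · exact nomatch h1
        · exact h1.symm
      obtain ⟨q, hq1, hq2⟩ := projWalk ε hε p2 hex2.choose b hd hb
      by_cases hzz : hex2.choose = a
      · refine ⟨q.copy hzz rfl, ?_, ?_⟩
        · rw [Walk.support_copy]
          show (q.support.map Sum.inl).Sublist
            (Sum.inl a :: Sum.inr () :: p2.support)
          exact hq1.trans ((List.sublist_cons_self _ _).trans (List.sublist_cons_self _ _))
        · intro x hx
          rw [Walk.edges_copy] at hx
          rcases hq2 x hx with ⟨hf', hmem⟩ | ⟨hxε, i', hmem⟩
          · exact Or.inl ⟨hf', by simp [Walk.edges, hmem]⟩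
          · exact Or.inr ⟨hxε, i, by simp [Walk.edges]⟩
      · have hεz : G.ends ε = s(a, hex2.choose) := by
          rcases hz with h1 | h1 <;> rcases hz2 with h2 | h2
          · exact absurd (h2.trans h1.symm) hzz
          · rw [h1, h2]; exact hε
          · rw [h1, h2, hε]; exact Sym2.eq_swap
          · exact absurd (h2.trans h1.symm) hzz
        refine ⟨.cons ε hεz q, ?_, ?_⟩
        · show (Sum.inl a :: q.support.map Sum.inl).Sublist
            (Sum.inl a :: Sum.inr () :: p2.support)
          exact List.Sublist.cons₂ _ (List.Sublist.cons _ hq1)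
        · intro x hx
          rcases List.mem_cons.mp hx with rfl | hx
          · exact Or.inr ⟨rfl, i, by simp [Walk.edges]⟩
          · rcases hq2 x hx with ⟨hf', hmem⟩ | ⟨hxε, i', hmem⟩
            · exact Or.inl ⟨hf', by simp [Walk.edges, hmem]⟩
            · exact Or.inr ⟨hxε, i, by simp [Walk.edges]⟩

end Proj
end Multigraph

namespace Multigraph

section Project

variable {G : Multigraph} {u v : G.V}

lemma count_inr_edges : (Finset.univ.filter
    fun e : (G.pinch u v).E => e.isRight = true).card = 4 := by
  rw [card_filter_sum]
  have h1 : (Finset.univ.filter fun a : {e : G.E // G.ends e ≠ s(u, v)} =>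
      (Sum.inl a : (G.pinch u v).E).isRight = true).card = 0 := by
    simp [Sum.isRight]
  have h2 : (Finset.univ.filter fun b : Fin 2 ⊕ Fin 2 =>
      (Sum.inr b : (G.pinch u v).E).isRight = true).card = 4 := by
    simp [Sum.isRight]
  omega

lemma project_immersion {H : Multigraph} (hmult : G.mult u v = 2)
    (I : ImmersionData H (G.pinch u v)) (hnb : ∀ x, I.vmap x ≠ Sum.inr ()) :
    Nonempty (ImmersionData H G) := by
  classical
  -- vertex map lands in `inl`
  have hvm : ∀ x, ∃ y, I.vmap x = Sum.inl y := fun x => by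
    cases h : I.vmap x with
    | inl y => exact ⟨y, rfl⟩
    | inr t => cases t; exact absurd h (hnb x)
  choose vm hvm' using hvm
  have hvminj : Function.Injective vm := fun x y hxy =>
    I.inj (by rw [hvm' x, hvm' y, hxy])
  -- endpoints land in `inl`
  have hse : ∀ e, ∃ aa bb, I.pstart e = Sum.inl aa ∧ I.pend e = Sum.inl bb ∧
      s(aa, bb) = (H.ends e).map vm := fun e => by
    have h := I.ends_eq e
    obtain ⟨x, y, hxy⟩ := sym2_exists_eq (H.ends e)
    rw [hxy, Sym2.map_pair_eq] at h
    rcases Sym2.eq_iff.mp h with ⟨h1, h2⟩ | ⟨h1, h2⟩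
    · exact ⟨vm x, vm y, by rw [h1, hvm' x], by rw [h2, hvm' y],
        by rw [hxy, Sym2.map_pair_eq]⟩
    · exact ⟨vm y, vm x, by rw [h1, hvm' y], by rw [h2, hvm' x],
        by rw [hxy, Sym2.map_pair_eq, Sym2.eq_swap]⟩
  choose pa pb hpa hpb hends using hse
  -- the walks through the pinch vertex
  set T : Finset H.E := Finset.univ.filter
    (fun i => ∃ j : Fin 2 ⊕ Fin 2, (Sum.inr j : (G.pinch u v).E) ∈ (I.walk i).edges)
    with hTdef
  set S : H.E → Finset (G.pinch u v).E :=
    fun i => (I.walk i).edges.toFinset.filter (fun e => e.isRight = true) with hSdef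
  have hS2 : ∀ i ∈ T, 2 ≤ (S i).card := by
    intro i hi
    rw [hTdef, Finset.mem_filter] at hi
    obtain ⟨j, hj⟩ := hi.2
    have hWs : (Sum.inr () : (G.pinch u v).V) ∈ (I.walk i).support := by
      obtain ⟨z, hz, hzi⟩ := pinch_inr_ends_cases (u := u) (v := v) j
      exact Walk.mem_support_of_edge _ hj (by rw [hzi]; exact Sym2.mem_mk_right _ _)
    have hWa : (Sum.inr () : (G.pinch u v).V) ≠ I.pstart i := by rw [hpa i]; simp
    have hWb : (Sum.inr () : (G.pinch u v).V) ≠ I.pend i := by rw [hpb i]; simp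
    obtain ⟨e1, e2, h1, h2, hne12, hW1, hW2⟩ :=
      Walk.two_edges_at_interior (I.walk i) (I.isPath i) hWs hWa hWb
    obtain ⟨j1, hj1⟩ := w_edge_is_inr hW1
    obtain ⟨j2, hj2⟩ := w_edge_is_inr hW2
    apply Finset.one_lt_card.mpr
    refine ⟨e1, ?_, e2, ?_, hne12⟩
    · rw [hSdef]
      exact Finset.mem_filter.mpr ⟨List.mem_toFinset.mpr h1, by rw [hj1]; rfl⟩
    · rw [hSdef]
      exact Finset.mem_filter.mpr ⟨List.mem_toFinset.mpr h2, by rw [hj2]; rfl⟩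
  have hdisjS : ∀ i ∈ T, ∀ j ∈ T, i ≠ j → Disjoint (S i) (S j) := by
    intro i _ j _ hij
    refine Finset.disjoint_left.mpr fun a ha hb => ?_
    rw [hSdef, Finset.mem_filter, List.mem_toFinset] at ha hb
    exact I.edgeDisj i j hij ha.1 hb.1
  have hTcard : T.card ≤ 2 := by
    have hbU : (T.biUnion S).card ≤ 4 := by
      have hsub : T.biUnion S ⊆ Finset.univ.filter
          (fun e : (G.pinch u v).E => e.isRight = true) := by
        intro e he
        rw [Finset.mem_biUnion] at he
        obtain ⟨i, _, hi⟩ := he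
        rw [hSdef, Finset.mem_filter] at hi
        exact Finset.mem_filter.mpr ⟨Finset.mem_univ _, hi.2⟩
      exact le_trans (Finset.card_le_card hsub) (le_of_eq count_inr_edges)
    have hcb := Finset.card_biUnion hdisjS
    have hsum : ∑ _i ∈ T, 2 ≤ ∑ i ∈ T, (S i).card := Finset.sum_le_sum hS2
    rw [Finset.sum_const, smul_eq_mul] at hsum
    omega
  -- choose the replacement edges
  obtain ⟨ε1, ε2, hεne, hε1, hε2⟩ := exists_two_uv_edges hmult
  obtain ⟨εf, hεf1, hεf2⟩ : ∃ εf : H.E → G.E, (∀ k, G.ends (εf k) = s(u, v)) ∧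
      ∀ k l, k ≠ l → k ∈ T → l ∈ T → εf k ≠ εf l := by
    by_cases hex : ∃ k l, k ≠ l ∧ k ∈ T ∧ l ∈ T
    · obtain ⟨k0, l0, hkl, hk0, hl0⟩ := hex
      refine ⟨fun k => if k = k0 then ε1 else ε2, fun k => by
        dsimp only; split <;> [exact hε1; exact hε2], ?_⟩
      intro k l hne hk hl
      have hsub : ({k0, l0} : Finset H.E) ⊆ T := by
        intro x hx
        rcases Finset.mem_insert.mp hx with rfl | hx
        · exact hk0
        · rw [Finset.mem_singleton.mp hx]; exact hl0
      have hc2 : ({k0, l0} : Finset H.E).card = 2 := Finset.card_pair hkl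
      have hTeq : T = {k0, l0} :=
        (Finset.eq_of_subset_of_card_le hsub (by omega)).symm
      rw [hTeq] at hk hl
      simp only [Finset.mem_insert, Finset.mem_singleton] at hk hl
      dsimp only
      by_cases hk1 : k = k0
      · rw [if_pos hk1]
        have hl1 : l ≠ k0 := fun h => hne (by rw [hk1, h])
        rw [if_neg hl1]
        exact hεne
      · rw [if_neg hk1]
        have hl1 : l = k0 := by
          rcases hl with h | h
          · exact h
          · rcases hk with h' | h'
            · exact absurd h' hk1
            · exact absurd (h'.trans h.symm) hne
        rw [if_pos hl1]
        exact Ne.symm hεne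
    · push_neg at hex
      exact ⟨fun _ => ε1, fun _ => hε1, fun k l hne hk hl => absurd hl (hex k l hne hk)⟩
  -- assemble
  refine ⟨⟨vm, hvminj, pa, pb,
    fun e => (projWalk (εf e) (hεf1 e) (I.walk e) (pa e) (pb e) (hpa e) (hpb e)).1,
    hends, ?_, ?_⟩⟩
  · intro e
    have hp := (projWalk (εf e) (hεf1 e) (I.walk e) (pa e) (pb e) (hpa e) (hpb e)).2
    exact List.Nodup.of_map _ (hp.1.nodup (I.isPath e))
  · intro e e' hne x hx hx'
    have hq2 := (projWalk (εf e) (hεf1 e) (I.walk e) (pa e) (pb e) (hpa e) (hpb e)).2.2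
    have hq2' :=
      (projWalk (εf e') (hεf1 e') (I.walk e') (pa e') (pb e') (hpa e') (hpb e')).2.2
    rcases hq2 x hx with ⟨hf, hm⟩ | ⟨rfl, j, hj⟩
    · rcases hq2' x hx' with ⟨hf', hm'⟩ | ⟨hxε, j', hj'⟩
      · exact I.edgeDisj e e' hne hm hm'
      · rw [hxε] at hf
        exact hf (hεf1 e')
    · rcases hq2' _ hx' with ⟨hf', hm'⟩ | ⟨hxε, j', hj'⟩
      · exact hf' (hεf1 e)
      · exact hεf2 e e' hne
          (by rw [hTdef]; exact Finset.mem_filter.mpr ⟨Finset.mem_univ _, j, hj⟩)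
          (by rw [hTdef]; exact Finset.mem_filter.mpr ⟨Finset.mem_univ _, j', hj'⟩)
          hxε

end Project
end Multigraph

namespace Multigraph

lemma five_le_card {α : Type*} [DecidableEq α] {F : Finset α} {e1 e2 e3 e4 e5 : α}
    (m1 : e1 ∈ F) (m2 : e2 ∈ F) (m3 : e3 ∈ F) (m4 : e4 ∈ F) (m5 : e5 ∈ F)
    (d12 : e1 ≠ e2) (d13 : e1 ≠ e3) (d14 : e1 ≠ e4) (d15 : e1 ≠ e5)
    (d23 : e2 ≠ e3) (d24 : e2 ≠ e4) (d25 : e2 ≠ e5)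
    (d34 : e3 ≠ e4) (d35 : e3 ≠ e5) (d45 : e4 ≠ e5) : 5 ≤ F.card := by
  have hsub : ({e1, e2, e3, e4, e5} : Finset α) ⊆ F := by
    intro x hx
    simp only [Finset.mem_insert, Finset.mem_singleton] at hx
    rcases hx with rfl | rfl | rfl | rfl | rfl <;> assumption
  have hcard : ({e1, e2, e3, e4, e5} : Finset α).card = 5 := by
    rw [Finset.card_insert_of_notMem (by simp [d12, d13, d14, d15]),
        Finset.card_insert_of_notMem (by simp [d23, d24, d25]),
        Finset.card_insert_of_notMem (by simp [d34, d35]),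
        Finset.card_insert_of_notMem (by simp [d45]),
        Finset.card_singleton]
  exact hcard ▸ Finset.card_le_card hsub

/-- Decompose a nontrivial walk into its first edge and the rest. -/
lemma walk_decompose {G : Multigraph} {x y : G.V} (p : G.Walk x y) (hxy : x ≠ y) :
    ∃ (d : G.V) (e : G.E) (he : G.ends e = s(x, d)) (R : G.Walk d y),
      p = Walk.cons e he R := by
  cases p with
  | nil => exact absurd rfl hxy
  | cons e he R => exact ⟨_, e, he, R, rfl⟩

section Debranch

variable {G : Multigraph} {u v : G.V}

lemma debranch {H : Multigraph} (hmult : G.mult u v = 2)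
    (hdu : G.deg u = 4) (hdv : G.deg v = 4)
    (I : ImmersionData H (G.pinch u v)) (b : H.V) (hb : I.vmap b = Sum.inr ())
    (as : H.V → Fin 3 → H.E) (cs : H.V → Fin 3 → H.V)
    (hends : ∀ b' k, H.ends (as b' k) = s(b', cs b' k))
    (hainj : ∀ b', Function.Injective (as b'))
    (hcinj : ∀ b', Function.Injective (cs b'))
    (hall : ∀ b' e, b' ∈ H.ends e → ∃ k, e = as b' k) :
    ∃ I' : ImmersionData H (G.pinch u v), ∀ x, I'.vmap x ≠ Sum.inr () := by
  classical
  have huv : u ≠ v := mult_pos_ne hmult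
  -- basics
  have hcsb : ∀ b' k, cs b' k ≠ b' := fun b' k h =>
    H.noLoop (as b' k) (by rw [hends b' k, h]; simp)
  have hvm_ne : ∀ x, x ≠ b → I.vmap x ≠ Sum.inr () := fun x hx h =>
    hx (I.inj (h.trans hb.symm))
  -- oriented walks
  have hQg : ∀ b' k, ∃ q : (G.pinch u v).Walk (I.vmap b') (I.vmap (cs b' k)),
      q.IsPath ∧ (∀ x, x ∈ q.edges ↔ x ∈ (I.walk (as b' k)).edges) := by
    intro b' k
    have h := I.ends_eq (as b' k)
    rw [hends b' k, Sym2.map_pair_eq] at h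
    rcases Sym2.eq_iff.mp h with ⟨h1, h2⟩ | ⟨h1, h2⟩
    · obtain ⟨q, hs, he⟩ := walk_congr (I.walk (as b' k)) h1 h2
      refine ⟨q, ?_, fun x => by rw [he]⟩
      show q.support.Nodup
      rw [hs]
      exact I.isPath _
    · obtain ⟨q, hs, he⟩ := walk_congr (I.walk (as b' k)).reverse h2 h1
      refine ⟨q, ?_, fun x => by rw [he, Walk.edges_reverse, List.mem_reverse]⟩
      show q.support.Nodup
      rw [hs, Walk.support_reverse]
      exact List.nodup_reverse.mpr (I.isPath _)
  -- edge disjointness helper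
  have hdiff : ∀ (i1 i2 : H.E), i1 ≠ i2 → ∀ x1 ∈ (I.walk i1).edges,
      ∀ x2 ∈ (I.walk i2).edges, x1 ≠ x2 := by
    intro i1 i2 hne x1 h1 x2 h2 heq
    exact I.edgeDisj i1 i2 hne h1 (heq ▸ h2)
  -- only the walks at `b` can use the pinch vertex
  have hnotouch : ∀ i, (∀ k, i ≠ as b k) →
      ∀ j : Fin 2 ⊕ Fin 2, (Sum.inr j : (G.pinch u v).E) ∉ (I.walk i).edges := by
    intro i hik jj hjj
    -- each walk at b contains an inr edge
    have hbk : ∀ k : Fin 3, ∃ jk : Fin 2 ⊕ Fin 2,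
        (Sum.inr jk : (G.pinch u v).E) ∈ (I.walk (as b k)).edges := by
      intro k
      obtain ⟨q, hqp, hqe⟩ := hQg b k
      have hne : I.vmap b ≠ I.vmap (cs b k) := fun h => (hcsb b k) (I.inj h.symm)
      obtain ⟨e, he, hWe⟩ := q.exists_edge_at_start hne
      rw [hb] at hWe
      obtain ⟨jk, rfl⟩ := w_edge_is_inr hWe
      exact ⟨jk, (hqe _).mp he⟩
    choose jb hjb using hbk
    -- the endpoints of walk i avoid the pinch vertex
    have hps : I.pstart i ≠ Sum.inr () ∧ I.pend i ≠ Sum.inr () := by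
      have h := I.ends_eq i
      obtain ⟨x, y, hxy⟩ := sym2_exists_eq (H.ends i)
      have hxb : x ≠ b := by
        intro hh
        obtain ⟨k0, hk0⟩ := hall b i (by rw [hxy, ← hh]; exact Sym2.mem_mk_left _ _)
        exact hik k0 hk0
      have hyb : y ≠ b := by
        intro hh
        obtain ⟨k0, hk0⟩ := hall b i (by rw [hxy, ← hh]; exact Sym2.mem_mk_right _ _)
        exact hik k0 hk0
      rw [hxy, Sym2.map_pair_eq] at h
      rcases Sym2.eq_iff.mp h with ⟨h1, h2⟩ | ⟨h1, h2⟩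
      · exact ⟨by rw [h1]; exact hvm_ne x hxb, by rw [h2]; exact hvm_ne y hyb⟩
      · exact ⟨by rw [h1]; exact hvm_ne y hyb, by rw [h2]; exact hvm_ne x hxb⟩
    -- so the pinch vertex is interior, giving two inr edges in walk i
    have hWs : (Sum.inr () : (G.pinch u v).V) ∈ (I.walk i).support := by
      obtain ⟨zz, _, hzz⟩ := pinch_inr_ends_cases (u := u) (v := v) jj
      exact Walk.mem_support_of_edge _ hjj (by rw [hzz]; exact Sym2.mem_mk_right _ _)
    obtain ⟨e1, e2, h1, h2, hne12, hW1, hW2⟩ :=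
      Walk.two_edges_at_interior (I.walk i) (I.isPath i) hWs (Ne.symm hps.1) (Ne.symm hps.2)
    obtain ⟨j1, rfl⟩ := w_edge_is_inr hW1
    obtain ⟨j2, rfl⟩ := w_edge_is_inr hW2
    -- five distinct elements of `Fin 2 ⊕ Fin 2`
    have hne' : ∀ (k : Fin 3) (jx : Fin 2 ⊕ Fin 2),
        (Sum.inr jx : (G.pinch u v).E) ∈ (I.walk i).edges → jx ≠ jb k := by
      intro k jx hjx hh
      exact hdiff i (as b k) (hik k) _ hjx _ (hjb k) (by rw [hh])
    have hjbne : ∀ k k' : Fin 3, k ≠ k' → jb k ≠ jb k' := by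
      intro k k' hkk hh
      exact hdiff (as b k) (as b k') (fun h => hkk (hainj b h)) _ (hjb k) _ (hjb k')
        (by rw [hh])
    have h5 : 5 ≤ (Finset.univ : Finset (Fin 2 ⊕ Fin 2)).card := by
      refine five_le_card (Finset.mem_univ j1) (Finset.mem_univ j2)
        (Finset.mem_univ (jb 0)) (Finset.mem_univ (jb 1)) (Finset.mem_univ (jb 2))
        (fun h => hne12 (by rw [h])) (hne' 0 j1 h1) (hne' 1 j1 h1) (hne' 2 j1 h1)
        (hne' 0 j2 h2) (hne' 1 j2 h2) (hne' 2 j2 h2)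
        (hjbne 0 1 (by decide)) (hjbne 0 2 (by decide)) (hjbne 1 2 (by decide))
    have : (Finset.univ : Finset (Fin 2 ⊕ Fin 2)).card = 4 := by decide
    omega
  -- decompose the three walks at `b`
  have hQ : ∀ k : Fin 3, ∃ (z : G.V) (j : Fin 2 ⊕ Fin 2)
      (R : (G.pinch u v).Walk (Sum.inl z) (I.vmap (cs b k))),
      (z = u ∨ z = v) ∧
      ((G.pinch u v).ends (Sum.inr j) = s(Sum.inl z, Sum.inr ())) ∧
      ((Sum.inr () :: R.support : List (G.pinch u v).V).Nodup) ∧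
      (∀ x, x ∈ (I.walk (as b k)).edges ↔ x = Sum.inr j ∨ x ∈ R.edges) := by
    intro k
    obtain ⟨q0, hq0p, hq0e⟩ := hQg b k
    obtain ⟨q, hqs, hqe⟩ := walk_congr q0 hb rfl
    have hne : (Sum.inr () : (G.pinch u v).V) ≠ I.vmap (cs b k) :=
      (hvm_ne _ (hcsb b k)).symm
    obtain ⟨d, e, he, RR, hdec⟩ := walk_decompose q hne
    obtain ⟨jk, rfl⟩ := w_edge_is_inr (e := e) (by rw [he]; exact Sym2.mem_mk_left _ _)
    obtain ⟨zz, hzz, hze⟩ := pinch_inr_ends_cases (u := u) (v := v) jk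
    have hd : d = Sum.inl zz := by
      rw [hze] at he
      rcases Sym2.eq_iff.mp he with ⟨hh1, hh2⟩ | ⟨hh1, hh2⟩
      · exact nomatch hh1
      · exact hh1.symm
    obtain ⟨R', hRs, hRe⟩ := walk_congr RR hd rfl
    refine ⟨zz, jk, R', hzz, hze, ?_, ?_⟩
    · have hsup : q.support = Sum.inr () :: RR.support := by rw [hdec]; rfl
      rw [hRs, ← hsup, hqs]
      exact hq0p
    · intro x
      rw [← hq0e, ← hqe, hdec, hRe]
      simp [Walk.edges]
  choose z j R hz hjz hnod hedg using hQ
  have hjinj : ∀ k l, k ≠ l → j k ≠ j l := by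
    intro k l hkl heq
    exact hdiff (as b k) (as b l) (fun h => hkl (hainj b h))
      (Sum.inr (j k)) ((hedg k _).mpr (Or.inl rfl))
      (Sum.inr (j l)) ((hedg l _).mpr (Or.inl rfl)) (by rw [heq])
  -- W is not in the R's
  have hWR : ∀ k, (Sum.inr () : (G.pinch u v).V) ∉ (R k).support :=
    fun k => (List.nodup_cons.mp (hnod k)).1
  have hRpath : ∀ k, (R k).IsPath := fun k => (List.nodup_cons.mp (hnod k)).2
  have hinrR : ∀ (jj : Fin 2 ⊕ Fin 2) k, (Sum.inr jj : (G.pinch u v).E) ∉ (R k).edges := by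
    intro jj k hmem
    obtain ⟨zz, _, hzz⟩ := pinch_inr_ends_cases (u := u) (v := v) jj
    exact hWR k (Walk.mem_support_of_edge _ hmem (by rw [hzz]; exact Sym2.mem_mk_right _ _))
  -- pigeonhole
  obtain ⟨k, l, hkl, hzkl⟩ : ∃ k l, k ≠ l ∧ z k = z l := by
    rcases hz 0 with h0 | h0 <;> rcases hz 1 with h1 | h1 <;> rcases hz 2 with h2 | h2 <;>
      first
      | exact ⟨0, 1, by decide, h0.trans h1.symm⟩
      | exact ⟨0, 2, by decide, h0.trans h2.symm⟩
      | exact ⟨1, 2, by decide, h1.trans h2.symm⟩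
  obtain ⟨m, hmk, hml⟩ : ∃ m : Fin 3, m ≠ k ∧ m ≠ l := by
    have : ∀ k l : Fin 3, k ≠ l → ∃ m : Fin 3, m ≠ k ∧ m ≠ l := by decide
    exact this k l hkl
  have hcover : ∀ t : Fin 3, t = k ∨ t = l ∨ t = m := by
    have : ∀ k l m t : Fin 3, k ≠ l → m ≠ k → m ≠ l → (t = k ∨ t = l ∨ t = m) := by decide
    exact fun t => this k l m t hkl hmk hml
  -- the third walk goes to the other side
  have hzm : z m ≠ z k := by
    intro h
    exact side_card (u := u) (v := v) (j k) (j l) (j m)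
      (hjinj k l hkl) (hjinj k m (Ne.symm hmk)) (hjinj l m (Ne.symm hml))
      (by rw [hjz k, hjz l, hzkl]) (by rw [hjz k, hjz m, h]) huv
  -- `Sum.inl (z k)` is not a branch vertex
  have hynb : ∀ x, I.vmap x ≠ Sum.inl (z k) := by
    have hdegy : ((Finset.univ : Finset (G.pinch u v).E).filter
        (fun e => Sum.inl (z k) ∈ (G.pinch u v).ends e)).card = 4 := by
      rcases hz k with h | h
      · rw [h]; exact pinch_deg_u hmult hdu
      · rw [h]; exact pinch_deg_v hmult hdv
    intro x hx
    have hxb : x ≠ b := by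
      intro h
      rw [h, hb] at hx
      exact nomatch hx
    -- an edge at the image of each walk at x
    have hdd : ∀ k', ∃ d, d ∈ (I.walk (as x k')).edges ∧
        Sum.inl (z k) ∈ (G.pinch u v).ends d := by
      intro k'
      obtain ⟨q, hqp, hqe⟩ := hQg x k'
      have hne2 : I.vmap x ≠ I.vmap (cs x k') := fun h => (hcsb x k') (I.inj h.symm)
      obtain ⟨d, hd, hdy⟩ := q.exists_edge_at_start hne2
      exact ⟨d, (hqe _).mp hd, by rwa [hx] at hdy⟩
    choose dd hdd1 hdd2 using hdd
    -- first edges of the R's on the same side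
    have hfR : ∀ t : Fin 3, z t = z k → cs b t ≠ x → ∃ f, f ∈ (R t).edges ∧
        Sum.inl (z k) ∈ (G.pinch u v).ends f := by
      intro t hzt hcst
      have hne3 : (Sum.inl (z t) : (G.pinch u v).V) ≠ I.vmap (cs b t) := by
        intro h
        rw [hzt, ← hx] at h
        exact hcst (I.inj h).symm
      obtain ⟨f, hf, hfy⟩ := (R t).exists_edge_at_start hne3
      exact ⟨f, hf, by rwa [hzt] at hfy⟩
    have hasne : ∀ (k' t : Fin 3), cs b t ≠ x → as x k' ≠ as b t := by
      intro k' t hcst heq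
      have h := hends x k'
      rw [heq, hends b t] at h
      rcases Sym2.eq_iff.mp h with ⟨h1, h2⟩ | ⟨h1, h2⟩
      · exact hxb h1.symm
      · exact hcst h2
    have hmemF : ∀ t : Fin 3, z t = z k → (Sum.inr (j t) : (G.pinch u v).E) ∈
        (Finset.univ.filter (fun e => Sum.inl (z k) ∈ (G.pinch u v).ends e)) := by
      intro t hzt
      refine Finset.mem_filter.mpr ⟨Finset.mem_univ _, ?_⟩
      rw [hjz t, hzt]
      exact Sym2.mem_mk_left _ _
    have caseB : ∀ t s : Fin 3, t ≠ s → z t = z k → z s = z k → cs b t = x → False := by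
      intro t s hts hzt hzs hcst
      have hcss : cs b s ≠ x := fun h => hts (hcinj b (hcst.trans h.symm))
      obtain ⟨k0, hk0⟩ := hall x (as b t)
        (by rw [hends b t, hcst]; exact Sym2.mem_mk_right _ _)
      obtain ⟨k1, k2, hk12, hk10, hk20⟩ :=
        (by decide : ∀ k0 : Fin 3, ∃ k1 k2 : Fin 3, k1 ≠ k2 ∧ k1 ≠ k0 ∧ k2 ≠ k0) k0
      obtain ⟨fs, hfs, hfsy⟩ := hfR s hzs hcss
      have hne1 : as x k1 ≠ as b t := fun h => hk10 (hainj x (h.trans hk0))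
      have hne2 : as x k2 ≠ as b t := fun h => hk20 (hainj x (h.trans hk0))
      have h5 := five_le_card (hmemF t hzt) (hmemF s hzs)
        (Finset.mem_filter.mpr ⟨Finset.mem_univ _, hfsy⟩)
        (Finset.mem_filter.mpr ⟨Finset.mem_univ _, hdd2 k1⟩)
        (Finset.mem_filter.mpr ⟨Finset.mem_univ _, hdd2 k2⟩)
        (fun h => hjinj t s hts (Sum.inr_injective h))
        (fun h => hinrR (j t) s (h ▸ hfs))
        (hdiff (as b t) (as x k1) (Ne.symm hne1) _ ((hedg t _).mpr (Or.inl rfl))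
          _ (hdd1 k1))
        (hdiff (as b t) (as x k2) (Ne.symm hne2) _ ((hedg t _).mpr (Or.inl rfl))
          _ (hdd1 k2))
        (fun h => hinrR (j s) s (h ▸ hfs))
        (hdiff (as b s) (as x k1) (Ne.symm (hasne k1 s hcss)) _
          ((hedg s _).mpr (Or.inl rfl)) _ (hdd1 k1))
        (hdiff (as b s) (as x k2) (Ne.symm (hasne k2 s hcss)) _
          ((hedg s _).mpr (Or.inl rfl)) _ (hdd1 k2))
        (hdiff (as b s) (as x k1) (Ne.symm (hasne k1 s hcss)) _
          ((hedg s _).mpr (Or.inr hfs)) _ (hdd1 k1))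
        (hdiff (as b s) (as x k2) (Ne.symm (hasne k2 s hcss)) _
          ((hedg s _).mpr (Or.inr hfs)) _ (hdd1 k2))
        (hdiff (as x k1) (as x k2) (fun h => hk12 (hainj x h)) _ (hdd1 k1) _ (hdd1 k2))
      omega
    by_cases hcbk : cs b k = x
    · exact caseB k l hkl rfl hzkl.symm hcbk
    · by_cases hcbl : cs b l = x
      · exact caseB l k hkl.symm hzkl.symm rfl hcbl
      · -- both walks pass through the vertex
        obtain ⟨fk, hfk, hfky⟩ := hfR k rfl hcbk
        obtain ⟨fl, hfl, hfly⟩ := hfR l hzkl.symm hcbl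
        have h5 := five_le_card (hmemF k rfl) (hmemF l hzkl.symm)
          (Finset.mem_filter.mpr ⟨Finset.mem_univ _, hfky⟩)
          (Finset.mem_filter.mpr ⟨Finset.mem_univ _, hfly⟩)
          (Finset.mem_filter.mpr ⟨Finset.mem_univ _, hdd2 0⟩)
          (fun h => hjinj k l hkl (Sum.inr_injective h))
          (fun h => hinrR (j k) k (h ▸ hfk))
          (fun h => hinrR (j k) l (h ▸ hfl))
          (hdiff (as b k) (as x 0) (Ne.symm (hasne 0 k hcbk)) _
            ((hedg k _).mpr (Or.inl rfl)) _ (hdd1 0))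
          (fun h => hinrR (j l) k (h ▸ hfk))
          (fun h => hinrR (j l) l (h ▸ hfl))
          (hdiff (as b l) (as x 0) (Ne.symm (hasne 0 l hcbl)) _
            ((hedg l _).mpr (Or.inl rfl)) _ (hdd1 0))
          (hdiff (as b k) (as b l) (fun h => hkl (hainj b h)) _
            ((hedg k _).mpr (Or.inr hfk)) _ ((hedg l _).mpr (Or.inr hfl)))
          (hdiff (as b k) (as x 0) (Ne.symm (hasne 0 k hcbk)) _
            ((hedg k _).mpr (Or.inr hfk)) _ (hdd1 0))
          (hdiff (as b l) (as x 0) (Ne.symm (hasne 0 l hcbl)) _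
            ((hedg l _).mpr (Or.inr hfl)) _ (hdd1 0))
        omega
  -- construct the new immersion
  set vmap' : H.V → (G.pinch u v).V := Function.update I.vmap b (Sum.inl (z k))
    with hvmap'
  have hvm'b : vmap' b = Sum.inl (z k) := Function.update_self _ _ _
  have hvm'x : ∀ x, x ≠ b → vmap' x = I.vmap x := fun x hx =>
    Function.update_of_ne hx _ _
  have inj' : Function.Injective vmap' := by
    intro x1 x2 h
    by_cases h1 : x1 = b <;> by_cases h2 : x2 = b
    · rw [h1, h2]
    · rw [h1, hvm'b, hvm'x x2 h2] at h
      exact absurd h.symm (hynb x2)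
    · rw [h2, hvm'b, hvm'x x1 h1] at h
      exact absurd h (hynb x1)
    · rw [hvm'x x1 h1, hvm'x x2 h2] at h
      exact I.inj h
  -- the new walks
  have hNl : ∃ q : (G.pinch u v).Walk (Sum.inl (z k)) (I.vmap (cs b l)),
      q.IsPath ∧ ∀ x, x ∈ q.edges ↔ x ∈ (R l).edges := by
    obtain ⟨q, hs, he⟩ := walk_congr (R l) (congrArg Sum.inl hzkl.symm) rfl
    refine ⟨q, ?_, fun x => by rw [he]⟩
    show q.support.Nodup
    rw [hs]
    exact hRpath l
  have hNm : ∃ q : (G.pinch u v).Walk (Sum.inl (z k)) (I.vmap (cs b m)),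
      q.IsPath ∧ ∀ x ∈ q.edges,
        x ∈ (R m).edges ∨ x = Sum.inr (j k) ∨ x = Sum.inr (partner (j m)) := by
    rcases Classical.em ((Sum.inl (z k) : (G.pinch u v).V) ∈ (R m).support) with hym | hym
    · obtain ⟨q, hs, he⟩ := (R m).suffixFrom _ hym
      exact ⟨q, hs.nodup (hRpath m), fun x hx => Or.inl (he.mem hx)⟩
    · have hjky : (G.pinch u v).ends (Sum.inr (j k)) = s(Sum.inl (z k), Sum.inr ()) :=
        hjz k
      have hpm : (G.pinch u v).ends (Sum.inr (partner (j m)))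
          = s(Sum.inr (), Sum.inl (z m)) := by
        rw [partner_ends, hjz m, Sym2.eq_swap]
      refine ⟨Walk.cons (Sum.inr (j k)) hjky (Walk.cons (Sum.inr (partner (j m))) hpm
        (R m)), ?_, ?_⟩
      · show (Sum.inl (z k) :: Sum.inr () :: (R m).support).Nodup
        refine List.nodup_cons.mpr ⟨?_, List.nodup_cons.mpr ⟨hWR m, hRpath m⟩⟩
        intro hmem
        rcases List.mem_cons.mp hmem with h | h
        · exact nomatch h
        · exact hym h
      · intro x hx
        rcases List.mem_cons.mp hx with rfl | hx
        · exact Or.inr (Or.inl rfl)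
        · rcases List.mem_cons.mp hx with rfl | hx
          · exact Or.inr (Or.inr rfl)
          · exact Or.inl hx
  obtain ⟨Nl, hNlp, hNle⟩ := hNl
  obtain ⟨Nm, hNmp, hNme⟩ := hNm
  -- per-edge data
  have hasbne : ∀ t t' : Fin 3, t ≠ t' → as b t ≠ as b t' :=
    fun t t' htt h => htt (hainj b h)
  have main : ∀ e : H.E, ∃ (s t : (G.pinch u v).V) (q : (G.pinch u v).Walk s t),
      s(s, t) = (H.ends e).map vmap' ∧ q.IsPath ∧
      ∀ x ∈ q.edges,
        (e = as b k ∧ x ∈ (R k).edges) ∨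
        (e = as b l ∧ x ∈ (R l).edges) ∨
        (e = as b m ∧ (x ∈ (R m).edges ∨ x = Sum.inr (j k) ∨
          x = Sum.inr (partner (j m)))) ∨
        ((∀ t', e ≠ as b t') ∧ x ∈ (I.walk e).edges) := by
    intro e
    have hcs_ne_b : ∀ t : Fin 3, cs b t ≠ b := fun t => hcsb b t
    by_cases hek : e = as b k
    · refine ⟨Sum.inl (z k), I.vmap (cs b k), R k, ?_, hRpath k,
        fun x hx => Or.inl ⟨hek, hx⟩⟩
      rw [hek, hends b k, Sym2.map_pair_eq, hvm'b, hvm'x _ (hcs_ne_b k)]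
    · by_cases hel : e = as b l
      · refine ⟨Sum.inl (z k), I.vmap (cs b l), Nl, ?_, hNlp,
          fun x hx => Or.inr (Or.inl ⟨hel, (hNle x).mp hx⟩)⟩
        rw [hel, hends b l, Sym2.map_pair_eq, hvm'b, hvm'x _ (hcs_ne_b l)]
      · by_cases hem : e = as b m
        · refine ⟨Sum.inl (z k), I.vmap (cs b m), Nm, ?_, hNmp,
            fun x hx => Or.inr (Or.inr (Or.inl ⟨hem, hNme x hx⟩))⟩
          rw [hem, hends b m, Sym2.map_pair_eq, hvm'b, hvm'x _ (hcs_ne_b m)]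
        · have hno : ∀ t', e ≠ as b t' := by
            intro t' h
            rcases hcover t' with rfl | rfl | rfl
            exacts [hek h, hel h, hem h]
          have hbe : b ∉ H.ends e := by
            intro hbe
            obtain ⟨t0, ht0⟩ := hall b e hbe
            exact hno t0 ht0
          refine ⟨I.pstart e, I.pend e, I.walk e, ?_, I.isPath e,
            fun x hx => Or.inr (Or.inr (Or.inr ⟨hno, hx⟩))⟩
          rw [I.ends_eq e]
          obtain ⟨x1, x2, hx12⟩ := sym2_exists_eq (H.ends e)
          have hx1b : x1 ≠ b := fun h => hbe (by rw [hx12, ← h]; exact Sym2.mem_mk_left _ _)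
          have hx2b : x2 ≠ b := fun h => hbe (by rw [hx12, ← h]; exact Sym2.mem_mk_right _ _)
          rw [hx12, Sym2.map_pair_eq, Sym2.map_pair_eq, hvm'x _ hx1b, hvm'x _ hx2b]
  choose ps pt wq hqends hqpath hqspec using main
  -- pairwise edge-disjointness tools
  have hRdisj : ∀ t t' : Fin 3, t ≠ t' → ∀ x, x ∈ (R t).edges → x ∈ (R t').edges →
      False := fun t t' htt x h h' =>
    hdiff _ _ (hasbne t t' htt) x ((hedg t x).mpr (Or.inr h))
      x ((hedg t' x).mpr (Or.inr h')) rfl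
  have hRold : ∀ t : Fin 3, ∀ e, (∀ t', e ≠ as b t') → ∀ x, x ∈ (R t).edges →
      x ∈ (I.walk e).edges → False := fun t e hno x h h' =>
    hdiff (as b t) e (Ne.symm (hno t)) x ((hedg t x).mpr (Or.inr h)) x h' rfl
  have hdisj' : ∀ e e', e ≠ e' → List.Disjoint (wq e).edges (wq e').edges := by
    intro e e' hne x hx hx'
    have A := hqspec e x hx
    have B := hqspec e' x hx'
    rcases A with ⟨hek, hxk⟩ | ⟨hel, hxl⟩ | ⟨hem, hxm⟩ | ⟨hnoe, hxo⟩
    · rcases B with ⟨hek', hxk'⟩ | ⟨hel', hxl'⟩ | ⟨hem', hxm'⟩ | ⟨hnoe', hxo'⟩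
      · exact hne (hek.trans hek'.symm)
      · exact hRdisj k l hkl x hxk hxl'
      · rcases hxm' with h | h | h
        · exact hRdisj k m (Ne.symm hmk) x hxk h
        · exact hinrR (j k) k (h ▸ hxk)
        · exact hinrR _ k (h ▸ hxk)
      · exact hRold k e' hnoe' x hxk hxo'
    · rcases B with ⟨hek', hxk'⟩ | ⟨hel', hxl'⟩ | ⟨hem', hxm'⟩ | ⟨hnoe', hxo'⟩
      · exact hRdisj l k (Ne.symm hkl) x hxl hxk'
      · exact hne (hel.trans hel'.symm)
      · rcases hxm' with h | h | h
        · exact hRdisj l m (Ne.symm hml) x hxl h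
        · exact hinrR (j k) l (h ▸ hxl)
        · exact hinrR _ l (h ▸ hxl)
      · exact hRold l e' hnoe' x hxl hxo'
    · rcases B with ⟨hek', hxk'⟩ | ⟨hel', hxl'⟩ | ⟨hem', hxm'⟩ | ⟨hnoe', hxo'⟩
      · rcases hxm with h | h | h
        · exact hRdisj m k hmk x h hxk'
        · exact hinrR (j k) k (h ▸ hxk')
        · exact hinrR _ k (h ▸ hxk')
      · rcases hxm with h | h | h
        · exact hRdisj m l hml x h hxl'
        · exact hinrR (j k) l (h ▸ hxl')
        · exact hinrR _ l (h ▸ hxl')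
      · exact hne (hem.trans hem'.symm)
      · rcases hxm with h | h | h
        · exact hRold m e' hnoe' x h hxo'
        · exact hnotouch e' hnoe' (j k) (h ▸ hxo')
        · exact hnotouch e' hnoe' _ (h ▸ hxo')
    · rcases B with ⟨hek', hxk'⟩ | ⟨hel', hxl'⟩ | ⟨hem', hxm'⟩ | ⟨hnoe', hxo'⟩
      · exact hRold k e hnoe x hxk' hxo
      · exact hRold l e hnoe x hxl' hxo
      · rcases hxm' with h | h | h
        · exact hRold m e hnoe x h hxo
        · exact hnotouch e hnoe (j k) (h ▸ hxo)
        · exact hnotouch e hnoe _ (h ▸ hxo)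
      · exact I.edgeDisj e e' hne hxo hxo'
  refine ⟨⟨vmap', inj', ps, pt, wq, hqends, hqpath, hdisj'⟩, ?_⟩
  intro x
  by_cases hxb : x = b
  · rw [hxb]
    show vmap' b ≠ Sum.inr ()
    rw [hvm'b]
    exact fun h => nomatch h
  · show vmap' x ≠ Sum.inr ()
    rw [hvm'x x hxb]
    exact hvm_ne x hxb

end Debranch
end Multigraph

namespace Multigraph

/-- Edge functions for `K33`. -/
def k33as : K33.V → Fin 3 → K33.E := fun b t =>
  Sum.elim (fun i => (i, t)) (fun i => (t, i)) b

def k33cs : K33.V → Fin 3 → K33.V := fun b t =>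
  Sum.elim (fun _ => Sum.inr t) (fun _ => Sum.inl t) b

lemma k33_hends : ∀ (b : K33.V) (t : Fin 3), K33.ends (k33as b t) = s(b, k33cs b t) := by
  decide

lemma k33_hainj : ∀ b : K33.V, Function.Injective (k33as b) := by
  have h : ∀ (b : K33.V) (t t' : Fin 3), k33as b t = k33as b t' → t = t' := by decide
  exact fun b t t' htt => h b t t' htt

lemma k33_hcinj : ∀ b : K33.V, Function.Injective (k33cs b) := by
  have h : ∀ (b : K33.V) (t t' : Fin 3), k33cs b t = k33cs b t' → t = t' := by decide
  exact fun b t t' htt => h b t t' htt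

lemma k33_hall : ∀ (b : K33.V) (e : K33.E), b ∈ K33.ends e → ∃ t, e = k33as b t := by
  decide

end Multigraph

open Multigraph in
/-- If `G` is internally 4-edge-connected with no `K_{3,3}` immersion and has
exactly two parallel edges between vertices `u`, `v`, both of degree four,
then the graph obtained by pinching this double edge is internally
4-edge-connected and has no `K_{3,3}` immersion. -/
theorem pinch_preserves (G : Multigraph) (u v : G.V)
    (h4ec : G.Internally4EC) (hno : ¬ Immerses K33 G)
    (hmult : G.mult u v = 2) (hdu : G.deg u = 4) (hdv : G.deg v = 4) :
    (G.pinch u v).Internally4EC ∧ ¬ Immerses K33 (G.pinch u v) := by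
  constructor
  · exact pinch_internally4EC h4ec hmult hdu hdv
  · rintro ⟨I⟩
    by_cases hbw : ∃ b, I.vmap b = (Sum.inr () : (G.pinch u v).V)
    · obtain ⟨b, hb⟩ := hbw
      obtain ⟨I', hI'⟩ := debranch hmult hdu hdv I b hb k33as k33cs
        k33_hends k33_hainj k33_hcinj k33_hall
      exact hno (project_immersion hmult I' (fun x h => hI' x h))
    · exact hno (project_immersion hmult I (fun x h => hbw ⟨x, h⟩))
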